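/- Normalized weight on I_q = (1/c) q^(−ℕ): with W(q^(−k)/c) = (c/d)^k q^(k(k+1)) (c q^(k+1)/d; q)_∞ (q^(k+1); q)_∞ for k ∈ ℕ, the Jackson integral evaluates as ∑_{k=0}^∞ (1/(c q^k)) W(q^(−k)/c) = (q;q)_∞ / c, i.e. ∫_{I_q} W(x) d_q x = ((1−q)/c)(q;q)_∞. -/

import Mathlib

open scoped BigOperators

/-- q-Pochhammer infinite product `(a;q)_∞` over the reals. -/
noncomputable def qpR (q a : ℝ) : ℝ := ∏' n : ℕ, (1 - a * q ^ n)

open Finset Filter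
set_option maxHeartbeats 1000000
set_option linter.unusedVariables false

namespace QW

/-- finite q-pochhammer -/
noncomputable def po (q x : ℝ) (m : ℕ) : ℝ := ∏ i ∈ Finset.range m, (1 - x * q ^ i)

variable {q : ℝ}

lemma summable_log (hq0 : 0 < q) (hq1 : q < 1) {x : ℝ} (hx0 : 0 ≤ x) (hx1 : x < 1) :
    Summable fun n : ℕ => Real.log (1 - x * q ^ n) := by
  refine Summable.of_norm_bounded (g := fun n => (x / (1 - x)) * q ^ n)
    ((summable_geometric_of_lt_one hq0.le hq1).mul_left _) (fun n => ?_)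
  have hqn0 : (0:ℝ) ≤ q ^ n := pow_nonneg hq0.le n
  have hqn1 : q ^ n ≤ 1 := pow_le_one₀ hq0.le hq1.le
  have ht0 : 0 ≤ x * q ^ n := mul_nonneg hx0 hqn0
  have ht1 : x * q ^ n ≤ x := by nlinarith
  have h1 : 0 < 1 - x * q ^ n := by linarith
  have hlog0 : Real.log (1 - x * q ^ n) ≤ 0 := Real.log_nonpos (by linarith) (by linarith)
  have key : -Real.log (1 - x * q ^ n) ≤ (x * q ^ n) / (1 - x) := by
    rw [← Real.log_inv]
    have := Real.log_le_sub_one_of_pos (x := (1 - x * q ^ n)⁻¹) (by positivity)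
    have h4 : (1 - x * q ^ n)⁻¹ - 1 = (x * q ^ n) / (1 - x * q ^ n) := by
      field_simp
      ring
    refine this.trans ?_
    rw [h4]
    gcongr
  have : ‖Real.log (1 - x * q ^ n)‖ = -Real.log (1 - x * q ^ n) := by
    rw [Real.norm_eq_abs, abs_of_nonpos hlog0]
  rw [this]
  calc -Real.log (1 - x * q ^ n) ≤ (x * q ^ n) / (1 - x) := key
    _ = x / (1 - x) * q ^ n := by ring

lemma hasProd_exp (hq0 : 0 < q) (hq1 : q < 1) {x : ℝ} (hx0 : 0 ≤ x) (hx1 : x < 1) :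
    HasProd (fun n : ℕ => 1 - x * q ^ n)
      (Real.exp (∑' n : ℕ, Real.log (1 - x * q ^ n))) := by
  have hpos : ∀ n : ℕ, 0 < 1 - x * q ^ n := by
    intro n
    have hqn1 : q ^ n ≤ 1 := pow_le_one₀ hq0.le hq1.le
    nlinarith [pow_nonneg hq0.le n]
  have hs := (summable_log hq0 hq1 hx0 hx1).hasSum
  exact hs.rexp.congr_fun fun n => (Real.exp_log (hpos n)).symm

lemma qpR_eq_exp (hq0 : 0 < q) (hq1 : q < 1) {x : ℝ} (hx0 : 0 ≤ x) (hx1 : x < 1) :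
    qpR q x = Real.exp (∑' n : ℕ, Real.log (1 - x * q ^ n)) :=
  (hasProd_exp hq0 hq1 hx0 hx1).tprod_eq

lemma qpR_pos (hq0 : 0 < q) (hq1 : q < 1) {x : ℝ} (hx0 : 0 ≤ x) (hx1 : x < 1) :
    0 < qpR q x := by
  rw [qpR_eq_exp hq0 hq1 hx0 hx1]; exact Real.exp_pos _

lemma qpR_le_one (hq0 : 0 < q) (hq1 : q < 1) {x : ℝ} (hx0 : 0 ≤ x) (hx1 : x < 1) :
    qpR q x ≤ 1 := by
  rw [qpR_eq_exp hq0 hq1 hx0 hx1, Real.exp_le_one_iff]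
  refine tsum_nonpos fun n => Real.log_nonpos ?_ ?_
  · have hqn1 : q ^ n ≤ 1 := pow_le_one₀ hq0.le hq1.le
    nlinarith [pow_nonneg hq0.le n]
  · nlinarith [pow_nonneg hq0.le n, mul_nonneg hx0 (pow_nonneg hq0.le n)]

lemma multipliable_gen (hq0 : 0 < q) (hq1 : q < 1) {x : ℝ} (hx0 : 0 ≤ x) :
    Multipliable (fun n : ℕ => 1 - x * q ^ n) := by
  obtain ⟨m, hm⟩ : ∃ m : ℕ, x * q ^ m < 1 := by
    have h := (tendsto_pow_atTop_nhds_zero_of_lt_one hq0.le hq1).const_mul x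
    rw [mul_zero] at h
    exact (h.eventually_lt_const one_pos).exists
  have htail : HasProd (fun n : ℕ => 1 - x * q ^ (n + m))
      (Real.exp (∑' n : ℕ, Real.log (1 - (x * q ^ m) * q ^ n))) := by
    refine (hasProd_exp hq0 hq1 (mul_nonneg hx0 (pow_nonneg hq0.le m)) hm).congr_fun
      fun n => ?_
    rw [pow_add]; ring
  exact ⟨_, htail.prod_range_mul⟩

lemma qpR_split (hq0 : 0 < q) (hq1 : q < 1) {x : ℝ} (hx0 : 0 ≤ x) (k : ℕ) :
    qpR q x = po q x k * qpR q (x * q ^ k) := by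
  have hm : Multipliable (fun n : ℕ => 1 - x * q ^ (n + k)) := by
    refine (multipliable_gen hq0 hq1 (mul_nonneg hx0 (pow_nonneg hq0.le k))).congr fun n => ?_
    rw [pow_add]; ring
  have h := Multipliable.prod_mul_tprod_nat_mul' (f := fun n : ℕ => 1 - x * q ^ n) (k := k) hm
  rw [qpR, qpR, ← h, po]
  congr 1
  refine tprod_congr fun n => ?_
  show 1 - x * q ^ (n + k) = 1 - x * q ^ k * q ^ n
  rw [pow_add]; ring

lemma po_abs_le (hq0 : 0 < q) (hq1 : q < 1) {x : ℝ} (hx0 : 0 ≤ x) (m : ℕ) :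
    |po q x m| ≤ Real.exp (x * (1 - q)⁻¹) := by
  have h1 : |po q x m| ≤ ∏ i ∈ Finset.range m, (1 + x * q ^ i) := by
    rw [po, Finset.abs_prod]
    refine Finset.prod_le_prod (fun i _ => abs_nonneg _) fun i _ => ?_
    have ht : 0 ≤ x * q ^ i := mul_nonneg hx0 (pow_nonneg hq0.le i)
    rw [abs_le]; constructor <;> linarith
  have h2 : ∏ i ∈ Finset.range m, (1 + x * q ^ i)
      ≤ ∏ i ∈ Finset.range m, Real.exp (x * q ^ i) := by
    refine Finset.prod_le_prod (fun i _ => ?_) fun i _ => ?_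
    · have ht : 0 ≤ x * q ^ i := mul_nonneg hx0 (pow_nonneg hq0.le i)
      linarith
    · have := Real.add_one_le_exp (x * q ^ i)
      linarith
  have h3 : ∏ i ∈ Finset.range m, Real.exp (x * q ^ i)
      = Real.exp (∑ i ∈ Finset.range m, x * q ^ i) := (Real.exp_sum _ _).symm
  have h4 : ∑ i ∈ Finset.range m, x * q ^ i ≤ x * (1 - q)⁻¹ := by
    rw [← Finset.mul_sum]
    have hs : ∑ i ∈ Finset.range m, q ^ i ≤ (1 - q)⁻¹ := by
      have hsum : Summable fun i : ℕ => q ^ i := summable_geometric_of_lt_one hq0.le hq1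
      have := hsum.sum_le_tsum (Finset.range m) (fun i _ => pow_nonneg hq0.le i)
      rwa [tsum_geometric_of_lt_one hq0.le hq1] at this
    have hsnn : (0:ℝ) ≤ ∑ i ∈ Finset.range m, q ^ i :=
      Finset.sum_nonneg fun i _ => pow_nonneg hq0.le i
    exact mul_le_mul_of_nonneg_left hs hx0
  calc |po q x m| ≤ ∏ i ∈ Finset.range m, (1 + x * q ^ i) := h1
    _ ≤ ∏ i ∈ Finset.range m, Real.exp (x * q ^ i) := h2
    _ = Real.exp (∑ i ∈ Finset.range m, x * q ^ i) := h3
    _ ≤ Real.exp (x * (1 - q)⁻¹) := Real.exp_le_exp.2 h4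

end QW

namespace QW2
open QW

variable {q : ℝ}

/-- `(q;q)_m` -/
noncomputable def P (q : ℝ) (m : ℕ) : ℝ := ∏ i ∈ Finset.range m, (1 - q ^ (i + 1))

/-- Gaussian binomial coefficient as a real number. -/
noncomputable def qb (q : ℝ) (n k : ℕ) : ℝ :=
  if k ≤ n then P q n / (P q k * P q (n - k)) else 0

lemma P_pos (hq0 : 0 < q) (hq1 : q < 1) (m : ℕ) : 0 < P q m := by
  refine Finset.prod_pos fun i _ => ?_
  have : q ^ (i + 1) < 1 := pow_lt_one₀ hq0.le hq1 (Nat.succ_ne_zero i)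
  linarith

lemma P_succ (m : ℕ) : P q (m + 1) = P q m * (1 - q ^ (m + 1)) := Finset.prod_range_succ _ _

lemma qb_zero (hq0 : 0 < q) (hq1 : q < 1) (n : ℕ) : qb q n 0 = 1 := by
  rw [qb, if_pos (Nat.zero_le n)]
  simp [P]
  exact (P_pos hq0 hq1 n).ne'

lemma qb_pascal (hq0 : 0 < q) (hq1 : q < 1) (n k : ℕ) :
    qb q (n + 1) k = q ^ k * qb q n k + (if k = 0 then 0 else qb q n (k - 1)) := by
  have hne : ∀ m : ℕ, (1 : ℝ) - q ^ (m + 1) ≠ 0 := by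
    intro m hc
    have : q ^ (m + 1) < 1 := pow_lt_one₀ hq0.le hq1 (Nat.succ_ne_zero m)
    rw [sub_eq_zero] at hc; rw [← hc] at this; exact lt_irrefl _ this
  rcases Nat.eq_zero_or_pos k with rfl | hk
  · simp [qb_zero hq0 hq1]
  rcases le_or_gt k (n + 1) with h | h
  · obtain ⟨j, rfl⟩ : ∃ j, k = j + 1 := ⟨k - 1, by omega⟩
    obtain ⟨m, rfl⟩ : ∃ m, n = j + m := ⟨n - j, by omega⟩
    rw [if_neg (Nat.succ_ne_zero j)]
    have e2 : j + 1 - 1 = j := by omega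
    rw [e2]
    rcases Nat.eq_zero_or_pos m with rfl | hm
    · -- k = n+1 case
      simp only [Nat.add_zero]
      rw [qb, if_pos (by omega), qb, if_neg (by omega), qb, if_pos (by omega)]
      have e3 : j + 1 - (j + 1) = 0 := by omega
      have e4 : j - j = 0 := by omega
      rw [e3, e4]
      have hP0 : P q 0 = 1 := by simp [P]
      rw [hP0, mul_one, mul_one, div_self (P_pos hq0 hq1 _).ne',
        div_self (P_pos hq0 hq1 _).ne']
      ring
    · obtain ⟨m', rfl⟩ : ∃ m', m = m' + 1 := ⟨m - 1, by omega⟩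
      rw [qb, if_pos (by omega), qb, if_pos (by omega), qb, if_pos (by omega)]
      have e3 : j + (m' + 1) + 1 - (j + 1) = m' + 1 := by omega
      have e4 : j + (m' + 1) - (j + 1) = m' := by omega
      have e5 : j + (m' + 1) - j = m' + 1 := by omega
      rw [e3, e4, e5]
      have e6 : j + (m' + 1) + 1 = (j + (m' + 1)) + 1 := rfl
      rw [e6, P_succ (j + (m' + 1)), P_succ m', P_succ j]
      have key : (1 : ℝ) - q ^ (j + (m' + 1) + 1)
          = q ^ (j + 1) * (1 - q ^ (m' + 1)) + (1 - q ^ (j + 1)) := by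
        rw [show j + (m' + 1) + 1 = (j + 1) + (m' + 1) by omega, pow_add]; ring
      rw [key]
      have hPj := (P_pos hq0 hq1 j).ne'
      have hPm := (P_pos hq0 hq1 m').ne'
      have haj := hne j
      have ham := hne m'
      set a := (1 : ℝ) - q ^ (j + 1) with ha
      set bb := (1 : ℝ) - q ^ (m' + 1) with hb
      set Pn := P q (j + (m' + 1))
      set Pj := P q j
      set Pm := P q m'
      set Q := q ^ (j + 1)
      field_simp
  · rw [qb, if_neg (by omega)]
    rw [if_neg (show ¬ (k = 0) by omega)]
    rw [qb, if_neg (by omega), qb, if_neg (by omega)]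
    ring

/-- The key finite sum. -/
noncomputable def Aq (q b : ℝ) (n : ℕ) : ℝ :=
  ∑ k ∈ Finset.range (n + 1), qb q n k * (b ^ k * q ^ (k * k) * po q (b * q ^ (k + 1)) (n - k))

lemma po_succ_first (x : ℝ) (m : ℕ) :
    po q x (m + 1) = (1 - x) * po q (x * q) m := by
  rw [po, Finset.prod_range_succ', po]
  have : ∀ i : ℕ, 1 - x * q ^ (i + 1) = 1 - x * q * q ^ i := by
    intro i; rw [pow_succ]; ring
  simp only [this, pow_zero, mul_one]
  ring

lemma Aq_succ (hq0 : 0 < q) (hq1 : q < 1) (b : ℝ) (n : ℕ) :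
    Aq q b (n + 1) = Aq q (q * b) n := by
  have step1 : Aq q b (n + 1) =
      (∑ k ∈ Finset.range (n + 2),
        q ^ k * qb q n k * (b ^ k * q ^ (k * k) * po q (b * q ^ (k + 1)) (n + 1 - k)))
      + ∑ k ∈ Finset.range (n + 2),
        (if k = 0 then 0 else qb q n (k - 1)) *
          (b ^ k * q ^ (k * k) * po q (b * q ^ (k + 1)) (n + 1 - k)) := by
    rw [Aq, ← Finset.sum_add_distrib]
    refine Finset.sum_congr rfl fun k _ => ?_
    rw [qb_pascal hq0 hq1 n k]
    ring
  have step2 : ∑ k ∈ Finset.range (n + 2),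
        q ^ k * qb q n k * (b ^ k * q ^ (k * k) * po q (b * q ^ (k + 1)) (n + 1 - k))
      = ∑ k ∈ Finset.range (n + 1),
        q ^ k * qb q n k * (b ^ k * q ^ (k * k) * po q (b * q ^ (k + 1)) (n + 1 - k)) := by
    rw [Finset.sum_range_succ]
    rw [qb, if_neg (by omega)]
    simp
  have step3 : ∑ k ∈ Finset.range (n + 2),
        (if k = 0 then 0 else qb q n (k - 1)) *
          (b ^ k * q ^ (k * k) * po q (b * q ^ (k + 1)) (n + 1 - k))
      = ∑ k ∈ Finset.range (n + 1),
        qb q n k * (b ^ (k + 1) * q ^ ((k + 1) * (k + 1)) *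
          po q (b * q ^ (k + 2)) (n - k)) := by
    rw [Finset.sum_range_succ']
    simp only [if_neg (Nat.succ_ne_zero _), Nat.add_sub_cancel, ite_true, if_true,
      eq_self_iff_true, zero_mul, add_zero]
    refine Finset.sum_congr rfl fun k hk => ?_
    have e1 : n + 1 - (k + 1) = n - k := by omega
    rw [e1]
  rw [step1, step2, step3, ← Finset.sum_add_distrib, Aq]
  refine Finset.sum_congr rfl fun k hk => ?_
  have hkn : k ≤ n := Nat.lt_succ_iff.mp (Finset.mem_range.mp hk)
  rw [show n + 1 - k = (n - k) + 1 by omega, po_succ_first]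
  rw [show b * q ^ (k + 1) * q = b * q ^ (k + 2) by rw [pow_succ (n := k + 1)]; ring]
  rw [show q * b * q ^ (k + 1) = b * q ^ (k + 2) by rw [pow_succ (n := k + 1)]; ring]
  have ep : q ^ ((k + 1) * (k + 1)) = q ^ (k * k) * q ^ k * q ^ k * q := by
    rw [show (k + 1) * (k + 1) = k * k + k + k + 1 by ring, pow_succ, pow_add, pow_add]
  have eq1 : q ^ (k + 1) = q ^ k * q := pow_succ q k
  rw [ep, eq1, mul_pow]
  ring

lemma Aq_eq_one (hq0 : 0 < q) (hq1 : q < 1) (n : ℕ) : ∀ b : ℝ, Aq q b n = 1 := by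
  induction n with
  | zero =>
    intro b
    simp [Aq, po, qb_zero hq0 hq1]
  | succ n ih =>
    intro b
    rw [Aq_succ hq0 hq1 b n]
    exact ih (q * b)

end QW2
namespace QW3
open QW QW2

variable {q : ℝ}

lemma P_eq_po (m : ℕ) : P q m = po q q m := by
  refine Finset.prod_congr rfl fun i _ => ?_
  rw [pow_succ]; ring

lemma key_sum (hq0 : 0 < q) (hq1 : q < 1) {b : ℝ} (hb : 0 < b) :
    (∑' k : ℕ, b ^ k * q ^ (k * k) * qpR q (b * q ^ (k + 1)) * qpR q (q ^ (k + 1)))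
      = qpR q q := by
  set f : ℕ → ℕ → ℝ := fun n k => if k ≤ n then
      (∏ i ∈ Finset.range k, (1 - q ^ (n - k + i + 1))) *
        (b ^ k * q ^ (k * k) * po q (b * q ^ (k + 1)) (n - k) * qpR q (q ^ (k + 1)))
    else 0 with hf
  have hqk0 : ∀ k : ℕ, (0:ℝ) ≤ q ^ k := fun k => pow_nonneg hq0.le k
  have hqk1 : ∀ k : ℕ, q ^ (k + 1) < 1 := fun k => pow_lt_one₀ hq0.le hq1 (Nat.succ_ne_zero k)
  have hbq0 : ∀ k : ℕ, (0:ℝ) ≤ b * q ^ (k + 1) := fun k => mul_nonneg hb.le (hqk0 (k+1))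
  -- (A) the constant value of each row sum
  have Hconst : ∀ n : ℕ, (∑' k : ℕ, f n k) = qpR q q := by
    intro n
    have hzero : ∀ k ∉ Finset.range (n + 1), f n k = 0 := by
      intro k hk
      rw [hf]
      exact if_neg (by simp only [Finset.mem_range] at hk; omega)
    rw [tsum_eq_sum hzero]
    have : ∑ k ∈ Finset.range (n + 1), f n k
        = qpR q q * Aq q b n := by
      rw [Aq, Finset.mul_sum]
      refine Finset.sum_congr rfl fun k hk => ?_
      have hkn : k ≤ n := Nat.lt_succ_iff.mp (Finset.mem_range.mp hk)
      rw [hf]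
      simp only [if_pos hkn]
      have hratio : (∏ i ∈ Finset.range k, (1 - q ^ (n - k + i + 1))) * qpR q (q ^ (k + 1))
          = qpR q q * qb q n k := by
        have hsplit : qpR q q = P q k * qpR q (q ^ (k + 1)) := by
          have := qpR_split hq0 hq1 hq0.le k
          rw [show q * q ^ k = q ^ (k + 1) by rw [pow_succ]; ring] at this
          rw [this, P_eq_po]
        have hPn : P q n = P q (n - k) *
            ∏ i ∈ Finset.range k, (1 - q ^ (n - k + i + 1)) := by
          have := Finset.prod_range_add (fun i => (1:ℝ) - q ^ (i + 1)) (n - k) k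
          rw [show n - k + k = n by omega] at this
          exact this
        rw [qb, if_pos hkn, hsplit, hPn]
        have h1 := (P_pos hq0 hq1 k).ne'
        have h2 := (P_pos hq0 hq1 (n - k)).ne'
        field_simp
      linear_combination (b ^ k * q ^ (k * k) * po q (b * q ^ (k + 1)) (n - k)) * hratio
    rw [this, Aq_eq_one hq0 hq1 n b, mul_one]
  -- (B) pointwise limits
  have hab : ∀ k : ℕ, Filter.Tendsto (fun n => f n k) Filter.atTop
      (nhds (b ^ k * q ^ (k * k) * qpR q (b * q ^ (k + 1)) * qpR q (q ^ (k + 1)))) := by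
    intro k
    have h1 : Filter.Tendsto (fun n : ℕ => ∏ i ∈ Finset.range k, (1 - q ^ (n - k + i + 1)))
        Filter.atTop (nhds 1) := by
      have := tendsto_finset_prod (f := fun (i : ℕ) (n : ℕ) => 1 - q ^ (n - k + i + 1))
        (a := fun _ => (1:ℝ)) (x := Filter.atTop) (Finset.range k) (fun i _ => ?_)
      · simpa using this
      · have hp : Filter.Tendsto (fun n : ℕ => q ^ (n - k + i + 1)) Filter.atTop (nhds 0) := by
          have h0 : Filter.Tendsto (fun n : ℕ => q ^ (n - k)) Filter.atTop (nhds 0) :=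
            (tendsto_pow_atTop_nhds_zero_of_lt_one hq0.le hq1).comp (tendsto_sub_atTop_nat k)
          have := h0.mul_const (q ^ (i + 1))
          rw [zero_mul] at this
          refine this.congr fun n => ?_
          rw [← pow_add]
          congr 1
        simpa using tendsto_const_nhds.sub hp
    have h2 : Filter.Tendsto (fun n : ℕ => po q (b * q ^ (k + 1)) (n - k)) Filter.atTop
        (nhds (qpR q (b * q ^ (k + 1)))) := by
      have hm := (multipliable_gen hq0 hq1 (hbq0 k)).hasProd.tendsto_prod_nat
      exact hm.comp (tendsto_sub_atTop_nat k)
    have h3 := (h1.mul (((tendsto_const_nhds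
        (x := b ^ k * q ^ (k * k)) (f := Filter.atTop (α := ℕ))).mul h2).mul
        (tendsto_const_nhds (x := qpR q (q ^ (k + 1))))))
    rw [one_mul] at h3
    refine Filter.Tendsto.congr' ?_ h3
    filter_upwards [Filter.eventually_ge_atTop k] with n hn
    rw [hf]
    simp only [if_pos hn]
  -- (C) uniform bound
  have h_bound : ∀ (n : ℕ) (k : ℕ),
      ‖f n k‖ ≤ Real.exp (b * (1 - q)⁻¹) * (b ^ k * q ^ (k * k)) := by
    intro n k
    have hC : (0:ℝ) ≤ b ^ k * q ^ (k * k) := mul_nonneg (pow_nonneg hb.le k) (hqk0 _)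
    by_cases hkn : k ≤ n
    · rw [hf]
      simp only [if_pos hkn]
      have hr0 : (0:ℝ) ≤ ∏ i ∈ Finset.range k, (1 - q ^ (n - k + i + 1)) :=
        Finset.prod_nonneg fun i _ => by
          have := pow_le_one₀ hq0.le hq1.le (n := n - k + i + 1); linarith
      have hr1 : (∏ i ∈ Finset.range k, (1 - q ^ (n - k + i + 1))) ≤ 1 :=
        Finset.prod_le_one (fun i _ => by
          have := pow_le_one₀ hq0.le hq1.le (n := n - k + i + 1); linarith)
          (fun i _ => by have := hqk0 (n - k + i + 1); linarith)
      have hD0 : 0 < qpR q (q ^ (k + 1)) := qpR_pos hq0 hq1 (hqk0 (k+1)) (hqk1 k)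
      have hD1 : qpR q (q ^ (k + 1)) ≤ 1 := qpR_le_one hq0 hq1 (hqk0 (k+1)) (hqk1 k)
      have hpo : |po q (b * q ^ (k + 1)) (n - k)| ≤ Real.exp (b * (1 - q)⁻¹) := by
        refine (po_abs_le hq0 hq1 (hbq0 k) (n - k)).trans ?_
        rw [Real.exp_le_exp]
        have h1 : q ^ (k + 1) ≤ 1 := pow_le_one₀ hq0.le hq1.le
        have h2 : (0:ℝ) ≤ (1 - q)⁻¹ := by
          have h3 : (0:ℝ) < 1 - q := by linarith
          positivity
        nlinarith [mul_nonneg (mul_nonneg hb.le h2) (show (0:ℝ) ≤ 1 - q ^ (k + 1) by linarith)]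
      rw [Real.norm_eq_abs, abs_mul, abs_mul, abs_mul, abs_of_nonneg hr0,
        abs_of_nonneg hC, abs_of_nonneg hD0.le]
      calc (∏ i ∈ Finset.range k, (1 - q ^ (n - k + i + 1))) *
            (b ^ k * q ^ (k * k) * |po q (b * q ^ (k + 1)) (n - k)| * qpR q (q ^ (k + 1)))
          ≤ 1 * (b ^ k * q ^ (k * k) * Real.exp (b * (1 - q)⁻¹) * 1) := by
            have hpo0 : (0:ℝ) ≤ |po q (b * q ^ (k + 1)) (n - k)| := abs_nonneg _
            have he : (0:ℝ) ≤ Real.exp (b * (1 - q)⁻¹) := (Real.exp_pos _).le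
            nlinarith [mul_nonneg hC hpo0, mul_nonneg (mul_nonneg hC hpo0) hD0.le,
              mul_nonneg hC he]
        _ = Real.exp (b * (1 - q)⁻¹) * (b ^ k * q ^ (k * k)) := by ring
    · rw [hf]
      simp only [if_neg hkn, norm_zero]
      positivity
  -- (D) summability of the bound
  have h_sum : Summable (fun k : ℕ => Real.exp (b * (1 - q)⁻¹) * (b ^ k * q ^ (k * k))) := by
    refine Summable.mul_left _ ?_
    refine summable_of_ratio_norm_eventually_le (r := 1/2) (by norm_num) ?_
    have hq2 : q ^ 2 < 1 := by nlinarith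
    have ht : Filter.Tendsto (fun k : ℕ => b * q * (q ^ 2) ^ k) Filter.atTop (nhds 0) := by
      have := (tendsto_pow_atTop_nhds_zero_of_lt_one (by positivity) hq2).const_mul (b * q)
      rwa [mul_zero] at this
    filter_upwards [ht.eventually_lt_const (show (0:ℝ) < 1/2 by norm_num)] with k hk
    have e : b ^ (k + 1) * q ^ ((k + 1) * (k + 1))
        = (b ^ k * q ^ (k * k)) * (b * q * (q ^ 2) ^ k) := by
      rw [show (k + 1) * (k + 1) = k * k + 2 * k + 1 by ring, pow_add, pow_add,
        pow_mul, pow_succ, pow_one]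
      ring
    rw [Real.norm_eq_abs, Real.norm_eq_abs, e, abs_mul,
      abs_of_nonneg (show (0:ℝ) ≤ b ^ k * q ^ (k * k) by positivity),
      abs_of_nonneg (show (0:ℝ) ≤ b * q * (q ^ 2) ^ k by positivity)]
    have hC : (0:ℝ) ≤ b ^ k * q ^ (k * k) := by positivity
    nlinarith [abs_nonneg (b ^ k * q ^ (k * k))]
  -- conclude by Tannery's theorem
  have H := tendsto_tsum_of_dominated_convergence h_sum hab (Filter.Eventually.of_forall h_bound)
  have H2 : Filter.Tendsto (fun _ : ℕ => qpR q q) Filter.atTop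
      (nhds (∑' k : ℕ, b ^ k * q ^ (k * k) * qpR q (b * q ^ (k + 1)) * qpR q (q ^ (k + 1)))) :=
    H.congr fun n => Hconst n
  exact tendsto_nhds_unique H2 tendsto_const_nhds

end QW3

/-- Evaluation of the normalized q-integral `∫_{I_q} W(x) d_q x = ((1-q)/c)(q;q)_∞`. -/
theorem normalized_weight_integral (q : ℝ) (hq0 : 0 < q) (hq1 : q < 1) (c d : ℝ)
    (hc : 0 < c) (hd : 0 < d) (hcd : ∀ k : ℤ, c / d ≠ q ^ k) :
    (∑' k : ℕ, 1 / (c * q ^ k) *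
        ((c / d) ^ k * q ^ (k * (k + 1)) * qpR q (c * q ^ (k + 1) / d) * qpR q (q ^ (k + 1)))) =
      qpR q q / c := by
  have hb : 0 < c / d := div_pos hc hd
  have key := QW3.key_sum hq0 hq1 hb
  have hsummand : ∀ k : ℕ, 1 / (c * q ^ k) *
        ((c / d) ^ k * q ^ (k * (k + 1)) * qpR q (c * q ^ (k + 1) / d) * qpR q (q ^ (k + 1)))
      = (1 / c) * ((c / d) ^ k * q ^ (k * k) * qpR q ((c / d) * q ^ (k + 1)) *
          qpR q (q ^ (k + 1))) := by
    intro k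
    rw [show c * q ^ (k + 1) / d = c / d * q ^ (k + 1) by ring,
      show k * (k + 1) = k * k + k by ring, pow_add]
    have hq : (q : ℝ) ^ k ≠ 0 := (pow_pos hq0 k).ne'
    field_simp
  rw [tsum_congr hsummand, tsum_mul_left, key]
  ring
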